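/- For every permutation φ of {1,…,m} and every placement a with order φ (with no capacity restriction), the number of blocking blocks of the placement is at least #{ i : b_i > max_{1 ≤ j ≤ w} σ_j }. Consequently G^T ≥ G^Z, where G^T is the minimum number of blocking blocks over all placements with order φ ignoring capacities, and G^Z = #{ i : b_i > max_j σ_j }. (This is the per-iteration inequality showing that the lower bound LB4 dominates the lower bound LB3.) -/

import Mathlib

/-- Cost of assigning a block with index `bi` to a stack with value `s`:
`1` if `bi > s` (the block becomes blocking), `0` otherwise. -/
def blkCost (bi s : ℕ) : ℕ := if s < bi then 1 else 0

/-- Total cost `C(f)` of an assignment `f` of the blocks `b` to stacks with values `σ`. -/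
def totalCost {m w : ℕ} (b : Fin m → ℕ) (σ : Fin w → ℕ) (f : Fin m → Fin w) : ℕ :=
  ∑ i, blkCost (b i) (σ (f i))

/-- An assignment (or placement) is capacity-feasible if every stack `j` receives
at most `δ j` blocks. -/
def Feasible {m w : ℕ} (δ : Fin w → ℕ) (f : Fin m → Fin w) : Prop :=
  ∀ j, (Finset.univ.filter fun i => f i = j).card ≤ δ j

open Classical in
/-- Number of blocking blocks of the placement that puts block `b (φ i)` (placed `i`-th)
on stack `a i`: block `b (φ i)` is blocking if `b (φ i) > σ (a i)` or some smaller block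
of `B` was placed earlier on the same stack. -/
noncomputable def placementBlocking {m w : ℕ} (b : Fin m → ℕ) (σ : Fin w → ℕ)
    (φ : Equiv.Perm (Fin m)) (a : Fin m → Fin w) : ℕ :=
  (Finset.univ.filter fun i : Fin m =>
    σ (a i) < b (φ i) ∨ ∃ i', i' < i ∧ a i' = a i ∧ b (φ i') < b (φ i)).card

/-- For every order `φ` and every (capacity-unrestricted) placement `a`,
the number of blocking blocks is at least `#{i : b i > max_j σ j}`; consequently
`G^T ≥ G^Z` (the per-iteration inequality showing that LB4 dominates LB3). -/
theorem GT_ge_GZ {w m : ℕ} (hw : 0 < w) (σ : Fin w → ℕ)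
    (b : Fin m → ℕ) (hb : StrictAnti b) :
    (∀ (φ : Equiv.Perm (Fin m)) (a : Fin m → Fin w),
        (Finset.univ.filter fun i : Fin m => Finset.univ.sup σ < b i).card ≤
          placementBlocking b σ φ a) ∧
      ∀ φ : Equiv.Perm (Fin m),
        (Finset.univ.filter fun i : Fin m => Finset.univ.sup σ < b i).card ≤
          sInf {c : ℕ | ∃ a : Fin m → Fin w, c = placementBlocking b σ φ a} := by
  have key : ∀ (φ : Equiv.Perm (Fin m)) (a : Fin m → Fin w),
      (Finset.univ.filter fun i : Fin m => Finset.univ.sup σ < b i).card ≤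
        placementBlocking b σ φ a := by
    intro φ a
    classical
    unfold placementBlocking
    apply Finset.card_le_card_of_injOn (fun i => φ.symm i)
    · intro i hi
      simp only [Finset.mem_coe, Finset.mem_filter, Finset.mem_univ, true_and] at hi ⊢
      left
      calc σ (a (φ.symm i)) ≤ Finset.univ.sup σ := Finset.le_sup (Finset.mem_univ _)
        _ < b (φ (φ.symm i)) := by simpa using hi
    · intro x _ y _ h
      simpa using congrArg φ h
  refine ⟨key, fun φ => ?_⟩
  apply le_csInf
  · exact ⟨_, fun i => ⟨0, hw⟩, rfl⟩
  · rintro c ⟨a, rfl⟩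
    exact key φ a
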